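/- Let Δ be a fan in ℤ³ obtained by taking cones over the faces of the cube with vertices (±1,±1,±1), but with the vertex (1,1,1) replaced by (1,2,3). Then every continuous function h : ℝ³ → ℝ that is linear on each maximal cone of Δ and satisfies h(ℤ³) ⊆ ℤ is globally linear (i.e., given by a single linear form). -/

import Mathlib

open Module

/-- The cone of nonnegative linear combinations of four vectors. -/
def cone4 {V : Type*} [AddCommGroup V] [Module ℝ V] (a b c d : V) : Set V :=
  {x | ∃ s t p q : ℝ, 0 ≤ s ∧ 0 ≤ t ∧ 0 ≤ p ∧ 0 ≤ q ∧
    x = s • a + t • b + p • c + q • d}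

/-- The maximal cones of Fulton's deformed-cube fan `Δ` in `ℝ³`: the cones
over the six faces of the cube with vertices `(±1,±1,±1)`, where the vertex
`(1,1,1)` has been moved to `(1,2,3)`. -/
def deformedCubeFan : Set (Set (Fin 3 → ℝ)) :=
  { cone4 ![1, 2, 3] ![-1, 1, 1] ![1, -1, 1] ![-1, -1, 1],
    cone4 ![1, 1, -1] ![-1, 1, -1] ![1, -1, -1] ![-1, -1, -1],
    cone4 ![1, 2, 3] ![1, -1, 1] ![1, 1, -1] ![1, -1, -1],
    cone4 ![-1, 1, 1] ![-1, -1, 1] ![-1, 1, -1] ![-1, -1, -1],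
    cone4 ![1, 2, 3] ![-1, 1, 1] ![1, 1, -1] ![-1, 1, -1],
    cone4 ![1, -1, 1] ![-1, -1, 1] ![1, -1, -1] ![-1, -1, -1] }

lemma mem_cone4₁ {V : Type*} [AddCommGroup V] [Module ℝ V] (a b c d : V) :
    a ∈ cone4 a b c d :=
  ⟨1, 0, 0, 0, zero_le_one, le_refl 0, le_refl 0, le_refl 0, by simp⟩

lemma mem_cone4₂ {V : Type*} [AddCommGroup V] [Module ℝ V] (a b c d : V) :
    b ∈ cone4 a b c d :=
  ⟨0, 1, 0, 0, le_refl 0, zero_le_one, le_refl 0, le_refl 0, by simp⟩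

lemma mem_cone4₃ {V : Type*} [AddCommGroup V] [Module ℝ V] (a b c d : V) :
    c ∈ cone4 a b c d :=
  ⟨0, 0, 1, 0, le_refl 0, le_refl 0, zero_le_one, le_refl 0, by simp⟩

lemma mem_cone4₄ {V : Type*} [AddCommGroup V] [Module ℝ V] (a b c d : V) :
    d ∈ cone4 a b c d :=
  ⟨0, 0, 0, 1, le_refl 0, le_refl 0, le_refl 0, zero_le_one, by simp⟩

set_option maxHeartbeats 4000000 in
/-- Every continuous function on `ℝ³` that is linear on each maximal cone of
the deformed-cube fan and takes integer values on `ℤ³` is globally linear. -/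
theorem support_functions_of_deformed_cube_are_linear
    (h : (Fin 3 → ℝ) → ℝ) (hcont : Continuous h)
    (hlin : ∀ σ ∈ deformedCubeFan,
      ∃ ℓ : Dual ℝ (Fin 3 → ℝ), ∀ x ∈ σ, h x = ℓ x)
    (hint : ∀ z : Fin 3 → ℤ, ∃ m : ℤ, h (fun i => (z i : ℝ)) = (m : ℝ)) :
    ∃ ℓ : Dual ℝ (Fin 3 → ℝ), ∀ x, h x = ℓ x := by
  set v1 : Fin 3 → ℝ := ![1, 2, 3] with hv1
  set v2 : Fin 3 → ℝ := ![-1, 1, 1] with hv2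
  set v3 : Fin 3 → ℝ := ![1, -1, 1] with hv3
  set v4 : Fin 3 → ℝ := ![-1, -1, 1] with hv4
  set v5 : Fin 3 → ℝ := ![1, 1, -1] with hv5
  set v6 : Fin 3 → ℝ := ![-1, 1, -1] with hv6
  set v7 : Fin 3 → ℝ := ![1, -1, -1] with hv7
  set v8 : Fin 3 → ℝ := ![-1, -1, -1] with hv8
  obtain ⟨lT, hT⟩ := hlin (cone4 v1 v2 v3 v4) (by simp [deformedCubeFan, v1, v2, v3, v4])
  obtain ⟨lB, hB⟩ := hlin (cone4 v5 v6 v7 v8) (by simp [deformedCubeFan, v5, v6, v7, v8])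
  obtain ⟨lF, hF⟩ := hlin (cone4 v1 v3 v5 v7) (by simp [deformedCubeFan, v1, v3, v5, v7])
  obtain ⟨lK, hK⟩ := hlin (cone4 v2 v4 v6 v8) (by simp [deformedCubeFan, v2, v4, v6, v8])
  obtain ⟨lR, hR⟩ := hlin (cone4 v1 v2 v5 v6) (by simp [deformedCubeFan, v1, v2, v5, v6])
  obtain ⟨lL, hL⟩ := hlin (cone4 v3 v4 v7 v8) (by simp [deformedCubeFan, v3, v4, v7, v8])
  -- the six linear relations among the values of h at the eight generators
  have relT : 2 * h v1 + 3 * h v4 = 5 * h v2 + 4 * h v3 := by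
    have key : (2:ℝ) • v1 + (3:ℝ) • v4 = (5:ℝ) • v2 + (4:ℝ) • v3 := by
      funext i; fin_cases i <;> simp [hv1, hv2, hv3, hv4] <;> norm_num
    have e := congrArg lT key
    simp only [map_add, map_smul, smul_eq_mul] at e
    rw [hT _ (mem_cone4₁ v1 v2 v3 v4), hT _ (mem_cone4₂ v1 v2 v3 v4),
      hT _ (mem_cone4₃ v1 v2 v3 v4), hT _ (mem_cone4₄ v1 v2 v3 v4)]
    linarith
  have relB : h v5 + h v8 = h v6 + h v7 := by
    have key : v5 + v8 = v6 + v7 := by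
      funext i; fin_cases i <;> simp [hv5, hv6, hv7, hv8] <;> norm_num
    have e := congrArg lB key
    simp only [map_add] at e
    rw [hB _ (mem_cone4₁ v5 v6 v7 v8), hB _ (mem_cone4₂ v5 v6 v7 v8),
      hB _ (mem_cone4₃ v5 v6 v7 v8), hB _ (mem_cone4₄ v5 v6 v7 v8)]
    linarith
  have relF : 2 * h v1 + 5 * h v7 = 4 * h v3 + 3 * h v5 := by
    have key : (2:ℝ) • v1 + (5:ℝ) • v7 = (4:ℝ) • v3 + (3:ℝ) • v5 := by
      funext i; fin_cases i <;> simp [hv1, hv3, hv5, hv7] <;> norm_num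
    have e := congrArg lF key
    simp only [map_add, map_smul, smul_eq_mul] at e
    rw [hF _ (mem_cone4₁ v1 v3 v5 v7), hF _ (mem_cone4₂ v1 v3 v5 v7),
      hF _ (mem_cone4₃ v1 v3 v5 v7), hF _ (mem_cone4₄ v1 v3 v5 v7)]
    linarith
  have relK : h v2 + h v8 = h v4 + h v6 := by
    have key : v2 + v8 = v4 + v6 := by
      funext i; fin_cases i <;> simp [hv2, hv4, hv6, hv8] <;> norm_num
    have e := congrArg lK key
    simp only [map_add] at e
    rw [hK _ (mem_cone4₁ v2 v4 v6 v8), hK _ (mem_cone4₂ v2 v4 v6 v8),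
      hK _ (mem_cone4₃ v2 v4 v6 v8), hK _ (mem_cone4₄ v2 v4 v6 v8)]
    linarith
  have relR : 2 * h v1 + 4 * h v6 = 5 * h v2 + 3 * h v5 := by
    have key : (2:ℝ) • v1 + (4:ℝ) • v6 = (5:ℝ) • v2 + (3:ℝ) • v5 := by
      funext i; fin_cases i <;> simp [hv1, hv2, hv5, hv6] <;> norm_num
    have e := congrArg lR key
    simp only [map_add, map_smul, smul_eq_mul] at e
    rw [hR _ (mem_cone4₁ v1 v2 v5 v6), hR _ (mem_cone4₂ v1 v2 v5 v6),
      hR _ (mem_cone4₃ v1 v2 v5 v6), hR _ (mem_cone4₄ v1 v2 v5 v6)]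
    linarith
  have relL : h v3 + h v8 = h v4 + h v7 := by
    have key : v3 + v8 = v4 + v7 := by
      funext i; fin_cases i <;> simp [hv3, hv4, hv7, hv8] <;> norm_num
    have e := congrArg lL key
    simp only [map_add] at e
    rw [hL _ (mem_cone4₁ v3 v4 v7 v8), hL _ (mem_cone4₂ v3 v4 v7 v8),
      hL _ (mem_cone4₃ v3 v4 v7 v8), hL _ (mem_cone4₄ v3 v4 v7 v8)]
    linarith
  -- the candidate global linear functional
  set L : Dual ℝ (Fin 3 → ℝ) :=
      ((h v5 - h v6) / 2) • (LinearMap.proj 0 : (Fin 3 → ℝ) →ₗ[ℝ] ℝ)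
    + ((h v5 - h v7) / 2) • (LinearMap.proj 1 : (Fin 3 → ℝ) →ₗ[ℝ] ℝ)
    + (-(h v5 + h v8) / 2) • (LinearMap.proj 2 : (Fin 3 → ℝ) →ₗ[ℝ] ℝ) with hLdef
  have Lapp : ∀ y : Fin 3 → ℝ,
      L y = (h v5 - h v6) / 2 * y 0 + (h v5 - h v7) / 2 * y 1
        + (-(h v5 + h v8) / 2) * y 2 := by
    intro y
    simp [hLdef, LinearMap.proj_apply]
  -- L agrees with h at all eight generators
  have eL1 : L v1 = h v1 := by
    rw [Lapp, hv1]; simp; linarith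
  have eL2 : L v2 = h v2 := by
    rw [Lapp, hv2]; simp; linarith
  have eL3 : L v3 = h v3 := by
    rw [Lapp, hv3]; simp; linarith
  have eL4 : L v4 = h v4 := by
    rw [Lapp, hv4]; simp; linarith
  have eL5 : L v5 = h v5 := by
    rw [Lapp, hv5]; simp; linarith
  have eL6 : L v6 = h v6 := by
    rw [Lapp, hv6]; simp; linarith
  have eL7 : L v7 = h v7 := by
    rw [Lapp, hv7]; simp; linarith
  have eL8 : L v8 = h v8 := by
    rw [Lapp, hv8]; simp; linarith
  -- agreement of h and L on each of the six cones
  have agree : ∀ (l : Dual ℝ (Fin 3 → ℝ)) (a b c d : Fin 3 → ℝ),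
      (∀ x ∈ cone4 a b c d, h x = l x) → L a = h a → L b = h b → L c = h c →
      L d = h d → ∀ y ∈ cone4 a b c d, h y = L y := by
    rintro l a b c d hl ea eb ec ed y ⟨s, t, p, q, hs, ht, hp, hq, rfl⟩
    rw [hl _ ⟨s, t, p, q, hs, ht, hp, hq, rfl⟩]
    have ha' := hl a (mem_cone4₁ a b c d)
    have hb' := hl b (mem_cone4₂ a b c d)
    have hc' := hl c (mem_cone4₃ a b c d)
    have hd' := hl d (mem_cone4₄ a b c d)
    simp only [map_add, map_smul, smul_eq_mul]
    rw [← ha', ← hb', ← hc', ← hd', ← ea, ← eb, ← ec, ← ed]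
  have agT := agree lT v1 v2 v3 v4 hT eL1 eL2 eL3 eL4
  have agB := agree lB v5 v6 v7 v8 hB eL5 eL6 eL7 eL8
  have agF := agree lF v1 v3 v5 v7 hF eL1 eL3 eL5 eL7
  have agK := agree lK v2 v4 v6 v8 hK eL2 eL4 eL6 eL8
  have agR := agree lR v1 v2 v5 v6 hR eL1 eL2 eL5 eL6
  have agL := agree lL v3 v4 v7 v8 hL eL3 eL4 eL7 eL8
  -- coverage: every point lies in one of the six cones
  refine ⟨L, fun x => ?_⟩
  set X := x 0 with hX
  set Y := x 1 with hY
  set Z := x 2 with hZ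
  have memeq : ∀ s t p q : ℝ,
      s * 1 + t * (-1) + p * 1 + q * (-1) = X →
      False → True := fun _ _ _ _ _ _ => trivial
  clear memeq
  -- twelve simplicial pieces
  have pT1 : 0 ≤ X + Y → 5*X + 2*Y ≤ 3*Z → X + 4*Y ≤ 3*Z → h x = L x := by
    intro hA hBc hC
    exact agT x ⟨(X+Y)/3, (-5*X-2*Y+3*Z)/6, (-X-4*Y+3*Z)/6, 0,
      by linarith, by linarith, by linarith, le_refl 0,
      by funext i; fin_cases i <;>
        simp [hv1, hv2, hv3, hv4, hX, hY, hZ] <;> ring⟩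
  have pT2 : X + Y ≤ 0 → 0 ≤ X + Z → 0 ≤ Y + Z → h x = L x := by
    intro hA hBc hC
    exact agT x ⟨0, (Y+Z)/2, (X+Z)/2, -(X+Y)/2,
      le_refl 0, by linarith, by linarith, by linarith,
      by funext i; fin_cases i <;>
        simp [hv1, hv2, hv3, hv4, hX, hY, hZ] <;> ring⟩
  have pB1 : Z ≤ X → X ≤ Y → Y + Z ≤ 0 → h x = L x := by
    intro hA hBc hC
    exact agB x ⟨(X-Z)/2, (Y-X)/2, 0, -(Y+Z)/2,
      by linarith, by linarith, le_refl 0, by linarith,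
      by funext i; fin_cases i <;>
        simp [hv5, hv6, hv7, hv8, hX, hY, hZ] <;> ring⟩
  have pB2 : Z ≤ Y → Y ≤ X → X + Z ≤ 0 → h x = L x := by
    intro hA hBc hC
    exact agB x ⟨(Y-Z)/2, 0, (X-Y)/2, -(X+Z)/2,
      by linarith, le_refl 0, by linarith, by linarith,
      by funext i; fin_cases i <;>
        simp [hv5, hv6, hv7, hv8, hX, hY, hZ] <;> ring⟩
  have pF1 : 0 ≤ Y + Z → 0 ≤ 5*X - 4*Y + Z → 0 ≤ 5*X + 2*Y - 3*Z → h x = L x := by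
    intro hA hBc hC
    exact agF x ⟨(Y+Z)/5, (5*X-4*Y+Z)/10, (5*X+2*Y-3*Z)/10, 0,
      by linarith, by linarith, by linarith, le_refl 0,
      by funext i; fin_cases i <;>
        simp [hv1, hv3, hv5, hv7, hX, hY, hZ] <;> ring⟩
  have pF2 : Y + Z ≤ 0 → 0 ≤ X + Z → 0 ≤ X + Y → h x = L x := by
    intro hA hBc hC
    exact agF x ⟨0, (X+Z)/2, (X+Y)/2, -(Y+Z)/2,
      le_refl 0, by linarith, by linarith, by linarith,
      by funext i; fin_cases i <;>
        simp [hv1, hv3, hv5, hv7, hX, hY, hZ] <;> ring⟩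
  have pK1 : X ≤ Y → Y ≤ Z → X + Z ≤ 0 → h x = L x := by
    intro hA hBc hC
    exact agK x ⟨(Y-X)/2, (Z-Y)/2, 0, -(X+Z)/2,
      by linarith, by linarith, le_refl 0, by linarith,
      by funext i; fin_cases i <;>
        simp [hv2, hv4, hv6, hv8, hX, hY, hZ] <;> ring⟩
  have pK2 : X ≤ Z → Z ≤ Y → X + Y ≤ 0 → h x = L x := by
    intro hA hBc hC
    exact agK x ⟨(Z-X)/2, 0, (Y-Z)/2, -(X+Y)/2,
      by linarith, le_refl 0, by linarith, by linarith,
      by funext i; fin_cases i <;>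
        simp [hv2, hv4, hv6, hv8, hX, hY, hZ] <;> ring⟩
  have pR1 : 0 ≤ X + Z → 5*X + Z ≤ 4*Y → 3*Z ≤ X + 4*Y → h x = L x := by
    intro hA hBc hC
    exact agR x ⟨(X+Z)/4, (-5*X+4*Y-Z)/8, (X+4*Y-3*Z)/8, 0,
      by linarith, by linarith, by linarith, le_refl 0,
      by funext i; fin_cases i <;>
        simp [hv1, hv2, hv5, hv6, hX, hY, hZ] <;> ring⟩
  have pR2 : X + Z ≤ 0 → 0 ≤ Y + Z → 0 ≤ X + Y → h x = L x := by
    intro hA hBc hC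
    exact agR x ⟨0, (Y+Z)/2, (X+Y)/2, -(X+Z)/2,
      le_refl 0, by linarith, by linarith, by linarith,
      by funext i; fin_cases i <;>
        simp [hv1, hv2, hv5, hv6, hX, hY, hZ] <;> ring⟩
  have pL1 : Y ≤ X → X ≤ Z → Y + Z ≤ 0 → h x = L x := by
    intro hA hBc hC
    exact agL x ⟨(X-Y)/2, (Z-X)/2, 0, -(Y+Z)/2,
      by linarith, by linarith, le_refl 0, by linarith,
      by funext i; fin_cases i <;>
        simp [hv3, hv4, hv7, hv8, hX, hY, hZ] <;> ring⟩
  have pL2 : Y ≤ Z → Z ≤ X → X + Y ≤ 0 → h x = L x := by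
    intro hA hBc hC
    exact agL x ⟨(Z-Y)/2, 0, (X-Z)/2, -(X+Y)/2,
      by linarith, le_refl 0, by linarith, by linarith,
      by funext i; fin_cases i <;>
        simp [hv3, hv4, hv7, hv8, hX, hY, hZ] <;> ring⟩
  -- the decision tree
  rcases le_total (X + Y) 0 with hu | hu <;>
    rcases le_total (X + Z) 0 with hv | hv <;>
      rcases le_total (Y + Z) 0 with hw | hw
  · -- u ≤ 0, v ≤ 0, w ≤ 0 : ordering cases
    rcases le_total X Y with h01 | h01 <;>
      rcases le_total Y Z with h12 | h12 <;>
        rcases le_total X Z with h02 | h02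
    · exact pK1 h01 h12 hv
    · exact pK1 h01 h12 hv
    · exact pK2 h02 (by linarith) hu
    · exact pB1 h02 h01 hw
    · exact pL1 h01 h02 hw
    · exact pL2 (by linarith) (by linarith) hu
    · exact pB2 h12 h01 hv
    · exact pB2 h12 h01 hv
  · -- u ≤ 0, v ≤ 0, w ≥ 0 : K
    rcases le_total Y Z with h12 | h12
    · exact pK1 (by linarith) h12 hv
    · exact pK2 (by linarith) h12 hu
  · -- u ≤ 0, v ≥ 0, w ≤ 0 : L
    rcases le_total X Z with h02 | h02
    · exact pL1 (by linarith) h02 hw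
    · exact pL2 (by linarith) h02 hu
  · -- u ≤ 0, v ≥ 0, w ≥ 0 : T2
    exact pT2 hu hv hw
  · -- u ≥ 0, v ≤ 0, w ≤ 0 : B
    rcases le_total X Y with h01 | h01
    · exact pB1 (by linarith) h01 hw
    · exact pB2 (by linarith) h01 hv
  · -- u ≥ 0, v ≤ 0, w ≥ 0 : R2
    exact pR2 hv hw hu
  · -- u ≥ 0, v ≥ 0, w ≤ 0 : F2
    exact pF2 hw hv hu
  · -- u ≥ 0, v ≥ 0, w ≥ 0 : T1 / F1 / R1
    rcases le_total (4*Y) (5*X + Z) with hA | hA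
    · rcases le_total (5*X + 2*Y) (3*Z) with hC | hC
      · exact pT1 hu hC (by linarith)
      · exact pF1 hw (by linarith) (by linarith)
    · rcases le_total (X + 4*Y) (3*Z) with hD | hD
      · exact pT1 hu (by linarith) hD
      · exact pR1 hv hA hD
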